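/- arXiv:2310.10392 — 2 statements merged into one kernel-verified Lean document; each statement's English description precedes it below -/
import Mathlib

section
/- With y(t) = z(t) + ∫_{t−τ}^{t} e^{(t−s−τ)Â₀} ∑_{i=1}^m B̂_i ξ_i(s) ds and Â₀ nilpotent of index 2 (Â₀² = 0), the function y satisfies the delay-free ODE ẏ(t) = Â₀ y(t) + ∑_{i=1}^m B̂_{i0} ξ_i(t), where B̂_{i0} = e^{−τÂ₀} B̂_i = (I − τÂ₀) B̂_i. -/
set_option maxHeartbeats 1000000


open Matrix

lemma exp_of_sq_eq_zero {n : ℕ} (x : Matrix (Fin n) (Fin n) ℝ) (h : x ^ 2 = 0) :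
    NormedSpace.exp x = 1 + x := by
  rw [NormedSpace.exp_eq_tsum ℝ]
  have hz : ∀ k ∉ ({0, 1} : Finset ℕ), ((Nat.factorial k : ℝ)⁻¹) • x ^ k = 0 := by
    intro k hk
    simp only [Finset.mem_insert, Finset.mem_singleton, not_or] at hk
    have h2 : 2 ≤ k := by omega
    have : x ^ k = x ^ 2 * x ^ (k - 2) := by
      rw [← pow_add]; congr 1; omega
    rw [this, h, zero_mul, smul_zero]
  simp only []
  rw [tsum_eq_sum hz]
  simp [Finset.sum_pair (by norm_num : (0:ℕ) ≠ 1)]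

lemma ftc_helper {E : Type*} [NormedAddCommGroup E] [NormedSpace ℝ E]
    [CompleteSpace E] (f : ℝ → E) (hf : Continuous f) (τ : ℝ) (t : ℝ) :
    HasDerivAt (fun u => ∫ s in (u - τ)..u, f s) (f t - f (t - τ)) t := by
  have hG : ∀ a : ℝ, HasDerivAt (fun u => ∫ s in (0:ℝ)..u, f s) (f a) a := by
    intro a
    exact intervalIntegral.integral_hasDerivAt_right (hf.intervalIntegrable 0 a)
      (hf.stronglyMeasurable.stronglyMeasurableAtFilter) hf.continuousAt
  have h1 : HasDerivAt (fun u : ℝ => ∫ s in (0:ℝ)..(u - τ), f s)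
      ((1:ℝ) • f (t - τ)) t := by
    exact (hG (t - τ)).scomp t ((hasDerivAt_id t).sub_const τ)
  have h2 := (hG t).sub h1
  have key : (fun u : ℝ => ∫ s in (u - τ)..u, f s) =
      fun u => (∫ s in (0:ℝ)..u, f s) - ∫ s in (0:ℝ)..(u - τ), f s := by
    funext u
    rw [intervalIntegral.integral_interval_sub_left (hf.intervalIntegrable 0 u)
      (hf.intervalIntegrable 0 (u - τ))]
  rw [key]
  simp only [one_smul] at h2
  exact h2

/-- With `y(t) = z(t) + ∫_{t−τ}^t e^{(t−s−τ)Â₀} ∑ B̂ᵢ ξᵢ(s) ds` and `Â₀² = 0`, the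
function `y` satisfies the delay-free ODE `ẏ = Â₀ y + ∑ B̂ᵢ₀ ξᵢ(t)` where
`B̂ᵢ₀ = e^{−τÂ₀} B̂ᵢ = (I − τÂ₀) B̂ᵢ`. -/
theorem delay_free_ode (n p m : ℕ) (τ : ℝ) (hτ : 0 < τ)
    (A : Matrix (Fin n) (Fin n) ℝ) (hA : A ^ 2 = 0)
    (B : Fin m → Matrix (Fin n) (Fin p) ℝ)
    (ξ : Fin m → ℝ → (Fin p → ℝ)) (hξ : ∀ i, Continuous (ξ i))
    (z : ℝ → (Fin n → ℝ))
    (hz : ∀ t : ℝ, HasDerivAt z (A *ᵥ z t + ∑ i, B i *ᵥ ξ i (t - τ)) t)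
    (y : ℝ → (Fin n → ℝ))
    (hy : ∀ t : ℝ, y t = z t + ∫ s in (t - τ)..t,
        NormedSpace.exp ((t - s - τ) • A) *ᵥ (∑ i, B i *ᵥ ξ i s)) :
    (∀ i, NormedSpace.exp ((-τ) • A) * B i = (1 - τ • A) * B i) ∧
    ∀ t : ℝ, HasDerivAt y
      (A *ᵥ y t + ∑ i, (NormedSpace.exp ((-τ) • A) * B i) *ᵥ ξ i t) t := by
  have hexp : ∀ c : ℝ, NormedSpace.exp (c • A) = 1 + c • A := by
    intro c
    apply exp_of_sq_eq_zero
    rw [smul_pow, hA, smul_zero]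
  have hexp' : NormedSpace.exp ((-τ) • A) = 1 - τ • A := by
    rw [hexp, neg_smul, ← sub_eq_add_neg]
  constructor
  · intro i; rw [hexp']
  intro t
  -- notation
  set v : ℝ → Fin n → ℝ := fun s => ∑ i, B i *ᵥ ξ i s with hv
  have hvc : Continuous v := by
    apply continuous_finset_sum
    intro i _
    exact (LinearMap.continuous_of_finiteDimensional (B i).mulVecLin).comp (hξ i)
  set w : ℝ → Fin n → ℝ := fun s => A *ᵥ v s with hw
  have hwc : Continuous w :=
    (LinearMap.continuous_of_finiteDimensional A.mulVecLin).comp hvc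
  have hswc : Continuous (fun s : ℝ => s • w s) := continuous_id.smul hwc
  -- the integrand equals `v s + ((u-τ) • w s - s • w s)`
  have hint : ∀ u s : ℝ, NormedSpace.exp ((u - s - τ) • A) *ᵥ v s
      = v s + ((u - τ) • w s - s • w s) := by
    intro u s
    rw [hexp, Matrix.add_mulVec, Matrix.one_mulVec, Matrix.smul_mulVec]
    have : (u - s - τ) = (u - τ) - s := by ring
    rw [this, sub_smul]
  -- rewrite y as a sum of simpler functions
  have hyg : y = fun u => z u + ((∫ s in (u - τ)..u, v s)
      + ((u - τ) • (∫ s in (u - τ)..u, w s) - ∫ s in (u - τ)..u, s • w s)) := by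
    funext u
    rw [hy u]
    congr 1
    have e1 : (fun s => NormedSpace.exp ((u - s - τ) • A) *ᵥ v s)
        = fun s => v s + ((u - τ) • w s - s • w s) := funext (hint u)
    calc (∫ s in (u - τ)..u, NormedSpace.exp ((u - s - τ) • A) *ᵥ v s)
        = ∫ s in (u - τ)..u, (v s + ((u - τ) • w s - s • w s)) := by rw [e1]
      _ = (∫ s in (u - τ)..u, v s) + ∫ s in (u - τ)..u, ((u - τ) • w s - s • w s) := by
          apply intervalIntegral.integral_add (hvc.intervalIntegrable _ _)
          exact ((show Continuous fun s : ℝ => (u - τ) • w s from hwc.const_smul (u - τ)).sub hswc).intervalIntegrable _ _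
      _ = (∫ s in (u - τ)..u, v s)
          + ((u - τ) • (∫ s in (u - τ)..u, w s) - ∫ s in (u - τ)..u, s • w s) := by
          rw [intervalIntegral.integral_sub ((show Continuous fun s : ℝ => (u - τ) • w s from hwc.const_smul (u - τ)).intervalIntegrable _ _)
            (hswc.intervalIntegrable _ _), intervalIntegral.integral_smul]
  -- derivative of each piece
  have h1 := ftc_helper v hvc τ t
  have h2 := ftc_helper w hwc τ t
  have h3 := ftc_helper (fun s : ℝ => s • w s) hswc τ t
  have hprod : HasDerivAt (fun u : ℝ => (u - τ) • (∫ s in (u - τ)..u, w s))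
      ((1 : ℝ) • (∫ s in (t - τ)..t, w s) + (t - τ) • (w t - w (t - τ))) t := by
    have := HasDerivAt.smul ((hasDerivAt_id t).sub_const τ) h2
    simp only [id_eq] at this
    exact this.congr_deriv (add_comm _ _)
  have hD' : HasDerivAt y ((A *ᵥ z t + ∑ i, B i *ᵥ ξ i (t - τ))
      + ((v t - v (t - τ)) + (((1 : ℝ) • (∫ s in (t - τ)..t, w s)
        + (t - τ) • (w t - w (t - τ))) - (t • w t - (t - τ) • w (t - τ))))) t := by
    rw [hyg]
    exact (hz t).add (h1.add (hprod.sub h3))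
  convert hD' using 1
  -- now prove the two derivative expressions are equal
  have hAw : ∀ s : ℝ, A *ᵥ w s = 0 := by
    intro s
    show A *ᵥ (A *ᵥ v s) = 0
    rw [Matrix.mulVec_mulVec, ← pow_two, hA, Matrix.zero_mulVec]
  -- `A *ᵥ y t`
  have hAy : A *ᵥ y t = A *ᵥ z t + ∫ s in (t - τ)..t, w s := by
    rw [hy t, Matrix.mulVec_add]
    congr 1
    have e1 : (fun s => NormedSpace.exp ((t - s - τ) • A) *ᵥ v s)
        = fun s => v s + ((t - τ) • w s - s • w s) := funext (hint t)
    have hic : Continuous fun s => v s + ((t - τ) • w s - s • w s) :=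
      hvc.add ((show Continuous fun s : ℝ => (t - τ) • w s from hwc.const_smul (t - τ)).sub hswc)
    rw [show (∫ s in (t - τ)..t, NormedSpace.exp ((t - s - τ) • A) *ᵥ v s)
        = ∫ s in (t - τ)..t, (v s + ((t - τ) • w s - s • w s)) from by rw [e1]]
    set L := LinearMap.toContinuousLinearMap A.mulVecLin with hL
    have hLapp : ∀ x : Fin n → ℝ, L x = A *ᵥ x := fun x => rfl
    calc A *ᵥ (∫ s in (t - τ)..t, (v s + ((t - τ) • w s - s • w s)))
        = L (∫ s in (t - τ)..t, (v s + ((t - τ) • w s - s • w s))) := rfl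
      _ = ∫ s in (t - τ)..t, L (v s + ((t - τ) • w s - s • w s)) :=
          (L.intervalIntegral_comp_comm (hic.intervalIntegrable _ _)).symm
      _ = ∫ s in (t - τ)..t, w s := by
          congr 1
          funext s
          rw [hLapp, Matrix.mulVec_add, Matrix.mulVec_sub, Matrix.mulVec_smul,
            Matrix.mulVec_smul, hAw]
          simp [hw]
  -- the sum of control terms
  have hsum : ∑ i, (NormedSpace.exp ((-τ) • A) * B i) *ᵥ ξ i t = v t - τ • w t := by
    have e : ∀ i : Fin m, (NormedSpace.exp ((-τ) • A) * B i) *ᵥ ξ i t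
        = B i *ᵥ ξ i t - τ • (A *ᵥ (B i *ᵥ ξ i t)) := by
      intro i
      rw [hexp', Matrix.sub_mul, Matrix.one_mul, Matrix.sub_mulVec,
        Matrix.smul_mul, Matrix.smul_mulVec, ← Matrix.mulVec_mulVec]
    rw [Finset.sum_congr rfl (fun i _ => e i), Finset.sum_sub_distrib,
      ← Finset.smul_sum]
    have hws : ∑ i, A *ᵥ (B i *ᵥ ξ i t) = w t :=
      (map_sum A.mulVecLin (fun i => B i *ᵥ ξ i t) Finset.univ).symm
    rw [hws]
  rw [hAy, hsum]
  have hvτ : ∑ i, B i *ᵥ ξ i (t - τ) = v (t - τ) := rfl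
  rw [hvτ]
  module
end

section
/- Let M be the 2m(m+1) × 2m(m+1) real matrix defined blockwise as M = [[−Â, S₁, …, S_m],[Q₁, Â^⊤, 0, …],[⋮, 0, ⋱],[Q_m, 0, …, Â^⊤]] with Â = [[0,1],[0,0]] ⊗ I_m, S_i = [[0,0],[0,1]] ⊗ (1/r_i) b_i b_i^⊤, and Q_i = [[1,τ],[τ,τ²+1]] ⊗ W_i, where W_i = diag(0,…,μ_i,…,0) (entry μ_i > 0 in position i) and b_i the i-th standard basis vector. Then the characteristic polynomial of M equals λ^{2m(m−1)} ∏_{i=1}^m (λ⁴ − (μ_i/r_i)(τ²+1)λ² + μ_i/r_i). -/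
open Matrix Kronecker Polynomial

/-- `Â = [[0,1],[0,0]] ⊗ I_m`. -/
noncomputable def AhatM (m : ℕ) : Matrix (Fin 2 × Fin m) (Fin 2 × Fin m) ℝ :=
  !![(0:ℝ),1;0,0] ⊗ₖ (1 : Matrix (Fin m) (Fin m) ℝ)

/-- `S_i = [[0,0],[0,1]] ⊗ (1/r_i) b_i b_iᵀ`. -/
noncomputable def SM (m : ℕ) (r : Fin m → ℝ) (i : Fin m) :
    Matrix (Fin 2 × Fin m) (Fin 2 × Fin m) ℝ :=
  !![(0:ℝ),0;0,1] ⊗ₖ ((1 / r i) • Matrix.single i i (1:ℝ))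

/-- `Q_i = [[1,τ],[τ,τ²+1]] ⊗ diag(0,…,μ_i,…,0)`. -/
noncomputable def QM (m : ℕ) (μ : Fin m → ℝ) (τ : ℝ) (i : Fin m) :
    Matrix (Fin 2 × Fin m) (Fin 2 × Fin m) ℝ :=
  !![(1:ℝ), τ; τ, τ^2+1] ⊗ₖ Matrix.diagonal (fun j => if j = i then μ i else 0)

/-- The TPBVP block matrix `M = [[−Â, S₁, …, S_m],[Q₁, Âᵀ, 0, …],…,[Q_m, 0, …, Âᵀ]]`,
indexed with `Option (Fin m)` for the `m+1` block rows/columns (`none` is the first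
block), each block of size `2m`. -/
noncomputable def MM (m : ℕ) (r μ : Fin m → ℝ) (τ : ℝ) :
    Matrix (Option (Fin m) × (Fin 2 × Fin m)) (Option (Fin m) × (Fin 2 × Fin m)) ℝ :=
  fun p q =>
    match p.1, q.1 with
    | none, none => (-(AhatM m)) p.2 q.2
    | none, some j => SM m r j p.2 q.2
    | some i, none => QM m μ τ i p.2 q.2
    | some i, some j => if i = j then (AhatM m)ᵀ p.2 q.2 else 0

set_option linter.unreachableTactic false
set_option linter.unnecessarySeqFocus false
set_option linter.unusedTactic false

abbrev TIdx (m : ℕ) := {p : Fin m × Fin m // p.2 ≠ p.1}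

def eIdx (m : ℕ) : (Option (Fin m) × (Fin 2 × Fin m)) ≃ ((Fin 2 × TIdx m) ⊕ (Fin 4 × Fin m)) where
  toFun p := match p with
    | (none, (a, j)) => Sum.inr (⟨a.1, by omega⟩, j)
    | (some i, (a, j)) =>
        if h : j = i then Sum.inr (⟨a.1 + 2, by omega⟩, i) else Sum.inl (a, ⟨(i, j), h⟩)
  invFun q := match q with
    | Sum.inl (a, ⟨(i, j), _⟩) => (some i, (a, j))
    | Sum.inr (c, j) =>
        if h : (c : ℕ) < 2 then (none, (⟨c, h⟩, j))
        else (some j, (⟨(c : ℕ) - 2, by omega⟩, j))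
  left_inv := by
    rintro ⟨_ | i, a, j⟩
    · simp [a.isLt]
    · by_cases h : j = i
      · subst h; simp
      · simp [h]
  right_inv := by
    rintro (⟨a, ⟨⟨i, j⟩, h⟩⟩ | ⟨c, j⟩)
    · simp [h]
    · by_cases h : (c : ℕ) < 2
      · simp [h]
      · simp [h, Fin.ext_iff]; omega

noncomputable def Bmat (r μ τ : ℝ) : Matrix (Fin 4) (Fin 4) ℝ :=
  !![0,-1,0,0; 0,0,0,1/r; μ,μ*τ,0,0; μ*τ,μ*(τ^2+1),1,0]

lemma keyeq (m : ℕ) (r μ : Fin m → ℝ) (τ : ℝ) :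
    Matrix.reindex (eIdx m) (eIdx m) (MM m r μ τ) =
      Matrix.fromBlocks (Matrix.blockDiagonal fun _ : TIdx m => !![(0:ℝ),0;1,0]) 0 0
        (Matrix.blockDiagonal fun j => Bmat (r j) (μ j) τ) := by
  apply Matrix.ext
  rintro (⟨a, ⟨⟨i, j⟩, hij⟩⟩ | ⟨c, j⟩) (⟨b, ⟨⟨i', j'⟩, hij'⟩⟩ | ⟨c', j'⟩) <;>
    simp only [Matrix.reindex_apply, Matrix.submatrix_apply, eIdx, Equiv.coe_fn_symm_mk,
      Matrix.fromBlocks_apply₁₁, Matrix.fromBlocks_apply₁₂, Matrix.fromBlocks_apply₂₁,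
      Matrix.fromBlocks_apply₂₂, Matrix.zero_apply]
  · fin_cases a <;> fin_cases b <;>
      simp_all [MM, AhatM, Matrix.blockDiagonal_apply, Matrix.one_apply, Subtype.ext_iff,
        Prod.ext_iff, eq_comm, Matrix.vecHead, Matrix.vecTail] <;>
      try split_ifs <;> simp_all
  · fin_cases a <;> fin_cases c' <;>
      simp_all [MM, QM, AhatM, Matrix.diagonal_apply, Matrix.one_apply, hij, eq_comm,
        Matrix.vecHead, Matrix.vecTail] <;>
      try split_ifs <;> simp_all
    all_goals (intros; subst_vars; grind)
  · fin_cases c <;> fin_cases b <;>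
      simp_all [MM, SM, AhatM, Matrix.single, Matrix.one_apply, eq_comm,
        Matrix.vecHead, Matrix.vecTail] <;>
      try split_ifs <;> simp_all
  · fin_cases c <;> fin_cases c' <;>
      simp_all [MM, SM, QM, AhatM, Bmat, Matrix.blockDiagonal_apply, Matrix.diagonal_apply,
        Matrix.single, Matrix.one_apply, eq_comm, Matrix.vecHead, Matrix.vecTail]
    all_goals (split_ifs <;> (try simp_all) <;> (try ring))

lemma charpoly_nil : (!![(0:ℝ),0;1,0]).charpoly = X^2 := by
  have h : charmatrix (!![(0:ℝ),0;1,0]) = !![X, 0; -C 1, X] := by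
    apply Matrix.ext; intro i j
    fin_cases i <;> fin_cases j <;> simp [charmatrix_apply]
  rw [Matrix.charpoly, h, Matrix.det_fin_two]; simp [sq]

set_option maxHeartbeats 1000000 in
lemma charpoly_Bmat (r μ τ : ℝ) :
    (Bmat r μ τ).charpoly = X ^ 4 - C (μ / r * (τ ^ 2 + 1)) * X ^ 2 + C (μ / r) := by
  have h : charmatrix (Bmat r μ τ)
      = !![X, C 1, 0, 0; 0, X, 0, -C (1/r); -C μ, -C (μ*τ), X, 0;
           -C (μ*τ), -C (μ*(τ^2+1)), -C 1, X] := by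
    apply Matrix.ext; intro i j
    fin_cases i <;> fin_cases j <;> simp [Bmat, charmatrix_apply, Matrix.vecHead, Matrix.vecTail]
  rw [Matrix.charpoly, h]
  simp [Matrix.det_succ_row_zero, Fin.sum_univ_succ, Fin.succAbove]
  simp only [_root_.map_mul, map_add, map_pow, _root_.map_one, map_div₀, div_eq_mul_inv, map_inv₀]
  ring

lemma charpoly_blockDiagonal {o n R : Type*} [Fintype o] [DecidableEq o] [Fintype n]
    [DecidableEq n] [CommRing R] (f : o → Matrix n n R) :
    (Matrix.blockDiagonal f).charpoly = ∏ k, (f k).charpoly := by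
  have h : charmatrix (Matrix.blockDiagonal f)
      = Matrix.blockDiagonal (fun k => charmatrix (f k)) := by
    apply Matrix.ext; rintro ⟨i, k⟩ ⟨j, k'⟩
    by_cases hk : k = k' <;>
      simp [charmatrix_apply, Matrix.blockDiagonal_apply, Matrix.diagonal_apply, Prod.ext_iff, hk]
  rw [Matrix.charpoly, h, Matrix.det_blockDiagonal]
  rfl

lemma card_TIdx (m : ℕ) : Fintype.card (TIdx m) = m * (m - 1) := by
  have h1 : Fintype.card {q : Fin m × Fin m // q.2 = q.1} = m := by
    rw [Fintype.card_congr
      (⟨fun x => x.1.1, fun i => ⟨(i, i), rfl⟩,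
        by rintro ⟨⟨i, j⟩, h⟩; cases h; rfl, fun i => rfl⟩ :
        {q : Fin m × Fin m // q.2 = q.1} ≃ Fin m)]
    simp
  have h2 : Fintype.card (TIdx m) = Fintype.card (Fin m × Fin m)
      - Fintype.card {q : Fin m × Fin m // q.2 = q.1} :=
    Fintype.card_subtype_compl _
  rw [h2, h1]
  simp [← Nat.mul_pred]

/-- The characteristic polynomial of `M` is
`λ^{2m(m−1)} ∏ᵢ (λ⁴ − (μᵢ/rᵢ)(τ²+1)λ² + μᵢ/rᵢ)`. -/
theorem MM_charpoly (m : ℕ) (r μ : Fin m → ℝ) (τ : ℝ)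
    (hr : ∀ i, 0 < r i) (hμ : ∀ i, 0 < μ i) :
    (MM m r μ τ).charpoly =
      X ^ (2 * m * (m - 1)) *
        ∏ i : Fin m,
          (X ^ 4 - C (μ i / r i * (τ ^ 2 + 1)) * X ^ 2 + C (μ i / r i)) := by
  rw [← Matrix.charpoly_reindex (eIdx m), keyeq, Matrix.charpoly_fromBlocks_zero₁₂,
    charpoly_blockDiagonal, charpoly_blockDiagonal]
  simp only [charpoly_nil, charpoly_Bmat, Finset.prod_const, Finset.card_univ, card_TIdx,
    ← pow_mul, ← mul_assoc]
end
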